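/- arXiv:2207.05628 — 2 statements merged into one kernel-verified Lean document; each statement's English description precedes it below -/
import Mathlib

section
/- If F : ℂ^d → ℂ is holomorphic (entire in d complex variables) and vanishes on a Lebesgue-measurable subset Y ⊆ ℝ^d ⊆ ℂ^d of positive d-dimensional Lebesgue measure, then F vanishes identically on ℂ^d. -/
open MeasureTheory

open Filter Set

/-- A subset of `ℝ` of nonzero measure has an accumulation point in itself. -/
lemma acc_of_pos (S : Set ℝ) (hS : volume S ≠ 0) :
    ∃ x ∈ S, ∃ᶠ z in nhdsWithin x {x}ᶜ, z ∈ S := by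
  by_contra h
  push_neg at h
  have hdisc : DiscreteTopology S := by
    rw [discreteTopology_subtype_iff]
    intro x hx
    by_contra hb
    exact absurd (h x hx) (frequently_mem_iff_neBot.2 ⟨hb⟩)
  have hcnt : S.Countable := (HereditarilyLindelof_LindelofSets S).countable hdisc
  exact hS (hcnt.measure_zero volume)

/-- One-variable case. -/
lemma one_var (f : ℂ → ℂ) (hf : AnalyticOnNhd ℂ f Set.univ)
    (S : Set ℝ) (hS : volume S ≠ 0) (hv : ∀ x ∈ S, f x = 0) :
    ∀ z : ℂ, f z = 0 := by
  obtain ⟨x, hxS, hfreq⟩ := acc_of_pos S hS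
  have htend : Filter.Tendsto (fun t : ℝ => (t : ℂ)) (nhdsWithin x {x}ᶜ)
      (nhdsWithin (x : ℂ) {(x : ℂ)}ᶜ) := by
    apply ContinuousWithinAt.tendsto_nhdsWithin
    · exact Complex.continuous_ofReal.continuousWithinAt
    · intro t ht
      simp only [mem_compl_iff, mem_singleton_iff] at ht ⊢
      exact fun hc => ht (by exact_mod_cast hc)
  have hfreq' : ∃ᶠ w in nhdsWithin (x : ℂ) {(x : ℂ)}ᶜ, f w = 0 :=
    htend.frequently (hfreq.mono fun z hz => hv z hz)
  have := hf.eqOn_zero_of_preconnected_of_frequently_eq_zero isPreconnected_univ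
    (mem_univ (x : ℂ)) hfreq'
  intro z; exact this (mem_univ z)

noncomputable def consM (d : ℕ) : (ℂ × (Fin d → ℂ)) →L[ℂ] (Fin (d+1) → ℂ) :=
  ContinuousLinearMap.pi (fun i => Fin.cases (ContinuousLinearMap.fst ℂ ℂ (Fin d → ℂ))
    (fun j => (ContinuousLinearMap.proj j).comp (ContinuousLinearMap.snd ℂ ℂ (Fin d → ℂ))) i)

lemma consM_apply (d : ℕ) (t : ℂ) (w : Fin d → ℂ) : consM d (t, w) = Fin.cons t w := by
  funext i
  induction i using Fin.cases <;> simp [consM]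

lemma analytic_cons_left {d : ℕ} {F : (Fin (d+1) → ℂ) → ℂ}
    (hF : AnalyticOnNhd ℂ F Set.univ) (c : ℂ) :
    AnalyticOnNhd ℂ (fun w : Fin d → ℂ => F (Fin.cons c w)) Set.univ := by
  have h1 : AnalyticOnNhd ℂ (fun w : Fin d → ℂ => (c, w)) Set.univ :=
    analyticOnNhd_const.prod analyticOnNhd_id
  have h2 : AnalyticOnNhd ℂ (F ∘ consM d) Set.univ :=
    hF.comp ((consM d).analyticOnNhd Set.univ) (Set.mapsTo_univ _ _)
  have h3 := h2.comp h1 (Set.mapsTo_univ _ _)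
  have : (F ∘ ⇑(consM d)) ∘ (fun w : Fin d → ℂ => (c, w))
      = fun w : Fin d → ℂ => F (Fin.cons c w) := by
    funext w; simp [Function.comp, consM_apply]
  rwa [this] at h3

lemma analytic_cons_right {d : ℕ} {F : (Fin (d+1) → ℂ) → ℂ}
    (hF : AnalyticOnNhd ℂ F Set.univ) (w : Fin d → ℂ) :
    AnalyticOnNhd ℂ (fun t : ℂ => F (Fin.cons t w)) Set.univ := by
  have h1 : AnalyticOnNhd ℂ (fun t : ℂ => (t, w)) Set.univ :=
    analyticOnNhd_id.prod analyticOnNhd_const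
  have h2 : AnalyticOnNhd ℂ (F ∘ consM d) Set.univ :=
    hF.comp ((consM d).analyticOnNhd Set.univ) (Set.mapsTo_univ _ _)
  have h3 := h2.comp h1 (Set.mapsTo_univ _ _)
  have : (F ∘ ⇑(consM d)) ∘ (fun t : ℂ => (t, w))
      = fun t : ℂ => F (Fin.cons t w) := by
    funext t; simp [Function.comp, consM_apply]
  rwa [this] at h3

/-- If an entire function `F : ℂ^d → ℂ` vanishes on a measurable set `Y ⊆ ℝ^d ⊆ ℂ^d`
of positive `d`-dimensional Lebesgue measure, then `F` vanishes identically. -/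
theorem stmt4 {d : ℕ} (F : (Fin d → ℂ) → ℂ)
    (hF : AnalyticOnNhd ℂ F Set.univ)
    (Y : Set (Fin d → ℝ)) (hYm : MeasurableSet Y) (hY : 0 < volume Y)
    (hvanish : ∀ x ∈ Y, F (fun i => (x i : ℂ)) = 0) :
    ∀ z : Fin d → ℂ, F z = 0 := by
  induction d with
  | zero =>
    obtain ⟨x, hx⟩ := nonempty_of_measure_ne_zero hY.ne'
    intro z
    have : z = fun i => ((x i : ℝ) : ℂ) := funext fun i => i.elim0
    rw [this]
    exact hvanish x hx
  | succ d ih =>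
    intro z
    set e := MeasurableEquiv.piFinSuccAbove (fun _ : Fin (d+1) => ℝ) 0 with he
    have hmp := volume_preserving_piFinSuccAbove (fun _ : Fin (d+1) => ℝ) 0
    set Y' : Set (ℝ × (Fin d → ℝ)) := e.symm ⁻¹' Y with hY'def
    have hY'm : MeasurableSet Y' := e.symm.measurable hYm
    have hcons : ∀ (t : ℝ) (w : Fin d → ℝ), e.symm (t, w) = Fin.cons t w := by
      intro t w
      funext i
      induction i using Fin.cases <;>
        simp [he, MeasurableEquiv.piFinSuccAbove, Fin.insertNthEquiv]
    have hY' : volume Y' ≠ 0 := by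
      have := (hmp.symm e).measure_preimage hYm.nullMeasurableSet
      rw [hY'def, this]
      exact hY.ne'
    rw [Ne, Measure.volume_eq_prod, Measure.measure_prod_null hY'm, Filter.EventuallyEq, ae_iff] at hY'
    simp only [Pi.zero_apply, not_not] at hY'
    set A : Set ℝ := {t : ℝ | volume (Prod.mk t ⁻¹' Y') ≠ 0} with hAdef
    have hA : volume A ≠ 0 := hY'
    have hinner : ∀ t ∈ A, ∀ v : Fin d → ℂ, F (Fin.cons (t : ℂ) v) = 0 := by
      intro t ht
      refine ih (fun v => F (Fin.cons (t : ℂ) v)) (analytic_cons_left hF _)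
        (Prod.mk t ⁻¹' Y') (measurable_prodMk_left hY'm) (pos_iff_ne_zero.2 ht) ?_
      intro w hw
      have hmem : Fin.cons t w ∈ Y := by rw [← hcons t w]; exact hw
      have hv := hvanish _ hmem
      convert hv using 2
      funext i
      induction i using Fin.cases <;> simp
    have houter := one_var (fun s : ℂ => F (Fin.cons s (Fin.tail z)))
      (analytic_cons_right hF _) A hA (fun t ht => hinner t ht _)
    have h0 := houter (z 0)
    simp only [Fin.cons_self_tail] at h0
    exact h0
end

section
/- Let Λ ⊆ ℝ^d be a lattice with dual lattice Λ*, and let G(t) = Σ_{λ∈Λ} c_λ e^{-2πi λ·t} with (c_λ) ∈ ℓ²(Λ) (convergence in L²_loc, G being Λ*-periodic). Let φ ∈ L²(ℝ^d) be such that A ≤ Σ_{λ*∈Λ*} |Fφ(t+λ*)|² almost everywhere for some A > 0. If G(t)·Fφ(t) = 0 for almost every t ∈ ℝ^d, then G = 0 almost everywhere, and hence c_λ = 0 for all λ ∈ Λ. -/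
open MeasureTheory Real Matrix

/-- The Fourier transform on `ℝ^d` (with kernel `e^{-2πi ω·t}`), given by the
defining integral. -/
noncomputable def fourierTr {d : ℕ} (φ : (Fin d → ℝ) → ℂ) (ω : Fin d → ℝ) : ℂ :=
  ∫ t : Fin d → ℝ, φ t * Complex.exp (-(2 * π * Complex.I) * (∑ i, ω i * t i : ℝ))

/-- Let `Λ = Mℤ^d` with dual `Λ* = M^{-T}ℤ^d`, let `G` be a `Λ*`-periodic function whose
Fourier coefficients with respect to `Λ*` (computed on the fundamental domain
`P(Λ*) = M^{-T}[0,1]^d`) are `(c_λ)_{λ∈Λ} ∈ ℓ²`, and let `φ ∈ L²` satisfy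
`A ≤ ∑_{λ*∈Λ*} |Fφ(t+λ*)|²` a.e. for some `A > 0`. If `G·Fφ = 0` a.e., then `G = 0`
a.e. and all coefficients `c_λ` vanish. -/
theorem stmt15 {d : ℕ} (M : Matrix (Fin d) (Fin d) ℝ) (hM : IsUnit M.det)
    (G : (Fin d → ℝ) → ℂ) (hGm : AEStronglyMeasurable G (volume : Measure (Fin d → ℝ)))
    (hGper : ∀ w : Fin d → ℤ,
      (fun t => G (t + (Mᵀ)⁻¹.mulVec (fun i => (w i : ℝ)))) =ᵐ[(volume : Measure (Fin d → ℝ))] G)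
    (c : (Fin d → ℤ) → ℂ) (hc : Memℓp c 2)
    (hcoef : ∀ z : Fin d → ℤ, c z = |M.det| •
      ∫ t in (fun v => (Mᵀ)⁻¹.mulVec v) '' Set.Icc (0 : Fin d → ℝ) 1,
        G t * Complex.exp (2 * π * Complex.I *
          (∑ i, (M.mulVec (fun i => (z i : ℝ))) i * t i : ℝ)))
    (φ : (Fin d → ℝ) → ℂ) (hφ : MemLp φ 2 (volume : Measure (Fin d → ℝ)))
    (A : ℝ) (hA : 0 < A)
    (hlow : ∀ᵐ t : Fin d → ℝ ∂volume,
      A ≤ ∑' w : Fin d → ℤ, ‖fourierTr φ (t + (Mᵀ)⁻¹.mulVec (fun i => (w i : ℝ)))‖ ^ 2)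
    (hzero : (fun t => G t * fourierTr φ t) =ᵐ[(volume : Measure (Fin d → ℝ))]
      (0 : (Fin d → ℝ) → ℂ)) :
    (G =ᵐ[(volume : Measure (Fin d → ℝ))] (0 : (Fin d → ℝ) → ℂ)) ∧
      ∀ z : Fin d → ℤ, c z = 0 := by
  set v : (Fin d → ℤ) → (Fin d → ℝ) := fun w => (Mᵀ)⁻¹.mulVec (fun i => (w i : ℝ)) with hv
  -- for each w, a.e. t : G t * Fφ (t + v w) = 0
  have hshift : ∀ w : Fin d → ℤ,
      (fun t => G t * fourierTr φ (t + v w)) =ᵐ[(volume : Measure (Fin d → ℝ))] 0 := by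
    intro w
    have hmp : MeasurePreserving (fun t : Fin d → ℝ => t + v w) volume volume :=
      measurePreserving_add_right volume (v w)
    have h1 : (fun t => G (t + v w) * fourierTr φ (t + v w))
        =ᵐ[(volume : Measure (Fin d → ℝ))] 0 :=
      hmp.quasiMeasurePreserving.ae_eq_comp hzero
    filter_upwards [h1, hGper w] with t h1t h2t
    simp only [Pi.zero_apply] at h1t ⊢
    rw [← h2t]
    exact h1t
  have hall : ∀ᵐ t : Fin d → ℝ ∂volume, ∀ w : Fin d → ℤ,
      G t * fourierTr φ (t + v w) = 0 := ae_all_iff.mpr fun w => hshift w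
  have hG0 : G =ᵐ[(volume : Measure (Fin d → ℝ))] 0 := by
    filter_upwards [hall, hlow] with t h1 h2
    simp only [Pi.zero_apply]
    by_contra hne
    have hz : ∀ w : Fin d → ℤ, fourierTr φ (t + v w) = 0 := fun w =>
      (mul_eq_zero.mp (h1 w)).resolve_left hne
    have : (∑' w : Fin d → ℤ, ‖fourierTr φ (t + v w)‖ ^ 2) = 0 := by
      simp [hz]
    rw [this] at h2
    exact absurd h2 (not_le.mpr hA)
  refine ⟨hG0, fun z => ?_⟩
  rw [hcoef z]
  have : (∫ t in (fun v => (Mᵀ)⁻¹.mulVec v) '' Set.Icc (0 : Fin d → ℝ) 1,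
      G t * Complex.exp (2 * π * Complex.I *
        (∑ i, (M.mulVec (fun i => (z i : ℝ))) i * t i : ℝ))) = 0 := by
    rw [integral_congr_ae (g := fun _ => (0 : ℂ))]
    · simp
    · exact ae_restrict_of_ae (hG0.mono fun t ht => by simp [ht])
  rw [this, smul_zero]
end
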